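/- Let A be the 4×4 matrix over ℚ(q) given by A = [[q−1,0,0,0],[q−1,q(q−1),0,0],[(q²−q)(q−1),0,q²−1,0],[(1−q)(q−1),0,1−q,(q−1)²]], w = (q−1, (q−1)(q²−1), q², q²+q), v = (1, 1, q²−q, 1−q). Then for every n ≥ 1, w·A^{n−1}·vᵀ = (1/2)·q·(q²−1)·(2(q²−q)^{n−1} − 2(q−1)^{n−1} + (q−1)(q²−1)^{n−1} + (q−1)^{2n−1}). -/
import Mathlib


open Matrix

/-- The variable `q`, transcendental over `ℚ`. -/
noncomputable def qR : RatFunc ℚ := RatFunc.X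

/-- The branching matrix of `GL₂`. -/
noncomputable def Abr : Matrix (Fin 4) (Fin 4) (RatFunc ℚ) :=
  !![qR - 1, 0, 0, 0;
     qR - 1, qR * (qR - 1), 0, 0;
     (qR ^ 2 - qR) * (qR - 1), 0, qR ^ 2 - 1, 0;
     (1 - qR) * (qR - 1), 0, 1 - qR, (qR - 1) ^ 2]

/-- The row vector `w`. -/
noncomputable def wbr : Fin 4 → RatFunc ℚ :=
  ![qR - 1, (qR - 1) * (qR ^ 2 - 1), qR ^ 2, qR ^ 2 + qR]

/-- The column vector `v`. -/
noncomputable def vbr : Fin 4 → RatFunc ℚ :=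
  ![1, 1, qR ^ 2 - qR, 1 - qR]

instance : CharZero (RatFunc ℚ) :=
  charZero_of_injective_algebraMap (algebraMap ℚ (RatFunc ℚ)).injective

/-- Closed form for the row vector `w·A^m`. -/
noncomputable def ubr (m : ℕ) : Fin 4 → RatFunc ℚ :=
  ![qR * (1 - qR ^ 2) * (qR - 1) ^ m + (qR ^ 2 - 1) * (qR ^ 2 - qR) ^ m +
      (qR * (qR - 1) ^ 2 / 2) * (qR ^ 2 - 1) ^ m +
      (qR * (qR ^ 2 - 1) / 2) * (qR - 1) ^ (2 * m),
    (qR - 1) * (qR ^ 2 - 1) * (qR ^ 2 - qR) ^ m,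
    ((qR ^ 2 - qR) / 2) * (qR ^ 2 - 1) ^ m + ((qR ^ 2 + qR) / 2) * (qR - 1) ^ (2 * m),
    (qR ^ 2 + qR) * (qR - 1) ^ (2 * m)]

lemma key (m : ℕ) : Matrix.vecMul wbr (Abr ^ m) = ubr m := by
  induction m with
  | zero =>
      funext i
      fin_cases i <;> simp [wbr, ubr] <;> ring
  | succ m ih =>
      rw [pow_succ, ← Matrix.vecMul_vecMul, ih]
      funext i
      fin_cases i <;>
        simp [ubr, Abr, Matrix.vecMul, dotProduct, Fin.sum_univ_four,
          Matrix.vecHead, Matrix.vecTail, mul_add, pow_succ] <;>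
        ring

/-- For every `n ≥ 1`, `w·A^{n−1}·vᵀ` equals the closed formula
`(1/2)·q·(q²−1)·(2(q²−q)^{n−1} − 2(q−1)^{n−1} + (q−1)(q²−1)^{n−1} + (q−1)^{2n−1})`. -/
theorem stmt_14 (n : ℕ) (hn : 1 ≤ n) :
    Matrix.vecMul wbr (Abr ^ (n - 1)) ⬝ᵥ vbr =
      (1 / 2) * qR * (qR ^ 2 - 1) *
        (2 * (qR ^ 2 - qR) ^ (n - 1) - 2 * (qR - 1) ^ (n - 1) +
          (qR - 1) * (qR ^ 2 - 1) ^ (n - 1) + (qR - 1) ^ (2 * n - 1)) := by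
  obtain ⟨m, rfl⟩ : ∃ m, n = m + 1 := ⟨n - 1, (Nat.succ_pred_eq_of_pos hn).symm⟩
  have h1 : m + 1 - 1 = m := rfl
  have h2 : 2 * (m + 1) - 1 = 2 * m + 1 := by omega
  rw [h1, h2, key]
  simp [ubr, vbr, dotProduct, Fin.sum_univ_four]
  ring
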